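/- Let d ≥ 2, let a ∈ ℝ^d, and let c_{i,j} (i ≠ j) be real constants with c_{i,j} = c_{j,i} ≥ 0 for all i ≠ j and c_{i,i+1} > 0 for i = 1,…,d−1. Then there exists ξ = (ξ_1,…,ξ_d) ∈ Δ_d (in particular ξ_1 < ξ_2 < ⋯ < ξ_d) such that ξ_i = a_i + Σ_{j ≠ i} c_{i,j}/(ξ_i − ξ_j) for every i = 1,…,d. -/

import Mathlib

open Finset Real

namespace WeylAux

noncomputable def FF {d : ℕ} (a : Fin d → ℝ) (c : Fin d → Fin d → ℝ) (ξ : Fin d → ℝ) : ℝ :=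
  (∑ i, ((ξ i)^2/2 - a i * ξ i))
    - (1/2) * ∑ i, ∑ j ∈ Finset.univ.erase i, c i j * Real.log (ξ i - ξ j)

lemma contOn {d : ℕ} (a : Fin d → ℝ) (c : Fin d → Fin d → ℝ) :
    ContinuousOn (FF a c) {ξ : Fin d → ℝ | ∀ p q : Fin d, p ≠ q → ξ p ≠ ξ q} := by
  unfold FF
  apply ContinuousOn.sub
  · exact (continuous_finset_sum _ fun i _ =>
      (((continuous_apply i).pow 2).div_const 2).sub
        (continuous_const.mul (continuous_apply i))).continuousOn
  · apply continuousOn_const.mul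
    refine continuousOn_finset_sum _ fun i _ => continuousOn_finset_sum _ fun j hj => ?_
    refine continuousOn_const.mul (ContinuousOn.log ?_ ?_)
    · exact ((continuous_apply i).sub (continuous_apply j)).continuousOn
    · intro ξ hξ
      exact sub_ne_zero.2 (hξ i j (Finset.ne_of_mem_erase hj).symm)

lemma strictMono_of_consec {d : ℕ} (f : Fin d → ℝ)
    (h : ∀ k : ℕ, ∀ hk : k + 1 < d, f ⟨k, by omega⟩ < f ⟨k+1, hk⟩) : StrictMono f := by
  intro i j hij
  rcases i with ⟨i, hi⟩; rcases j with ⟨j, hj⟩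
  have hij' : i < j := hij
  clear hij
  induction j with
  | zero => omega
  | succ n ih =>
    have hn : n < d := by omega
    rcases Nat.lt_or_ge i n with h1 | h2
    · exact lt_trans (ih hn h1) (h n hj)
    · have hin : i = n := by omega
      subst hin
      exact h i hj

lemma isOpen_strictMono {d : ℕ} : IsOpen {ξ : Fin d → ℝ | StrictMono ξ} := by
  have hset : {ξ : Fin d → ℝ | StrictMono ξ} =
      ⋂ p : Fin d, ⋂ q : Fin d, {ξ : Fin d → ℝ | p < q → ξ p < ξ q} := by
    ext ξ
    simp only [Set.mem_setOf_eq, Set.mem_iInter, StrictMono]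
  rw [hset]
  refine isOpen_iInter_of_finite fun p => isOpen_iInter_of_finite fun q => ?_
  by_cases h : p < q
  · simp only [h, true_implies]
    exact isOpen_lt (continuous_apply p) (continuous_apply q)
  · simp only [h, false_implies]
    exact isOpen_univ


lemma slice_hasDerivAt {d : ℕ} (a : Fin d → ℝ) (c : Fin d → Fin d → ℝ)
    (ξ : Fin d → ℝ) (hξ : ∀ p q : Fin d, p ≠ q → ξ p ≠ ξ q) (i : Fin d) :
    HasDerivAt (fun t => FF a c (Function.update ξ i t))
      ((ξ i - a i) - (1/2) * ((∑ j ∈ Finset.univ.erase i, c i j * (1/(ξ i - ξ j)))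
        + ∑ j ∈ Finset.univ.erase i, c j i * (1/(ξ i - ξ j)))) (ξ i) := by
  classical
  have hA : HasDerivAt (fun t => ∑ p, ((Function.update ξ i t p)^2/2 - a p * Function.update ξ i t p))
      (ξ i - a i) (ξ i) := by
    have h : HasDerivAt (fun t => ∑ p, ((Function.update ξ i t p)^2/2 - a p * Function.update ξ i t p))
        (∑ p, if p = i then ξ i - a i else 0) (ξ i) := by
      refine HasDerivAt.fun_sum fun p _ => ?_
      by_cases hp : p = i
      · subst hp
        simp only [if_pos rfl]
        have h1 : HasDerivAt (fun t : ℝ => (Function.update ξ p t p)^2/2 - a p * Function.update ξ p t p)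
            (ξ p - a p) (ξ p) := by
          simp only [Function.update_self]
          have h1 : HasDerivAt (fun t : ℝ => t^2/2) (ξ p) (ξ p) := by
            simpa using (hasDerivAt_pow 2 (ξ p)).div_const 2
          have h2 : HasDerivAt (fun t : ℝ => a p * t) (a p) (ξ p) := by
            simpa using (hasDerivAt_id (ξ p)).const_mul (a p)
          exact h1.sub h2
        exact h1
      · simp only [Function.update_of_ne hp, if_neg hp]
        exact hasDerivAt_const _ _
    simpa using h
  set D : Fin d → Fin d → ℝ := fun p q =>
    if p = i then c p q * (1/(ξ p - ξ q)) else if q = i then c p i * (-1/(ξ p - ξ i)) else 0 with hD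
  have hB : HasDerivAt
      (fun t => ∑ p, ∑ q ∈ Finset.univ.erase p,
        c p q * Real.log (Function.update ξ i t p - Function.update ξ i t q))
      (∑ p, ∑ q ∈ Finset.univ.erase p, D p q) (ξ i) := by
    refine HasDerivAt.fun_sum fun p _ => HasDerivAt.fun_sum fun q hq => ?_
    have hqp : q ≠ p := Finset.ne_of_mem_erase hq
    by_cases hp : p = i
    · subst hp
      simp only [hD, if_pos rfl]
      have hne : ξ p - ξ q ≠ 0 := sub_ne_zero.2 (hξ p q hqp.symm)
      have h : HasDerivAt (fun t : ℝ => c p q * Real.log (t - ξ q))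
          (c p q * (1/(ξ p - ξ q))) (ξ p) := by
        have := (((hasDerivAt_id (ξ p)).sub_const (ξ q)).log (by simpa using hne)).const_mul (c p q)
        simpa using this
      simpa only [Function.update_self, Function.update_of_ne hqp] using h
    · by_cases hq' : q = i
      · subst hq'
        simp only [hD, if_neg hp, if_pos rfl]
        have hne : ξ p - ξ q ≠ 0 := sub_ne_zero.2 (hξ p q hqp.symm)
        have h : HasDerivAt (fun t : ℝ => c p q * Real.log (ξ p - t))
            (c p q * (-1/(ξ p - ξ q))) (ξ q) := by
          have := (((hasDerivAt_id (ξ q)).const_sub (ξ p)).log (by simpa using hne)).const_mul (c p q)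
          simpa [neg_div] using this
        simpa only [Function.update_self, Function.update_of_ne hp, if_true] using h
      · have heq : (fun t : ℝ => c p q * Real.log (Function.update ξ i t p - Function.update ξ i t q))
            = fun _ => c p q * Real.log (ξ p - ξ q) := by
          funext t
          rw [Function.update_of_ne hp, Function.update_of_ne hq']
        simp only [hD, if_neg hp, if_neg hq']
        rw [heq]
        exact hasDerivAt_const _ _
  have hsum : (∑ p, ∑ q ∈ Finset.univ.erase p, D p q)
      = (∑ j ∈ Finset.univ.erase i, c i j * (1/(ξ i - ξ j)))
        + ∑ j ∈ Finset.univ.erase i, c j i * (1/(ξ i - ξ j)) := by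
    have hrow : ∀ p ∈ Finset.univ.erase i,
        (∑ q ∈ Finset.univ.erase p, D p q) = c p i * (1/(ξ i - ξ p)) := by
      intro p hp
      have hpi : p ≠ i := Finset.ne_of_mem_erase hp
      rw [Finset.sum_eq_single i]
      · simp only [hD, if_neg hpi, if_pos rfl]
        rw [show ξ i - ξ p = -(ξ p - ξ i) by ring, div_neg]
        ring_nf
        simp
      · intro q _ hqi
        simp [hD, if_neg hpi, if_neg hqi]
      · intro h
        exact absurd (Finset.mem_erase.2 ⟨Ne.symm hpi, Finset.mem_univ i⟩) h
    rw [← Finset.add_sum_erase _ _ (Finset.mem_univ i), Finset.sum_congr rfl hrow]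
    congr 1
    refine Finset.sum_congr rfl fun q hq => ?_
    simp only [hD, if_pos rfl]
  have hfinal := hA.sub (hB.const_mul (1/2))
  rw [hsum] at hfinal
  simpa only [FF, Pi.sub_def] using hfinal


lemma lb1 {d : ℕ} (a : Fin d → ℝ) (c : Fin d → Fin d → ℝ)
    (hc : ∀ p q : Fin d, p ≠ q → 0 ≤ c p q) (ξ : Fin d → ℝ) (M : ℝ)
    (hM : ∀ i, |ξ i| ≤ M) (i₀ : Fin d) (hi₀ : M ≤ |ξ i₀|) :
    M^2/2 - ((∑ i, |a i|) + (∑ p, ∑ q ∈ Finset.univ.erase p, c p q)) * M ≤ FF a c ξ := by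
  have hM0 : 0 ≤ M := le_trans (abs_nonneg _) (hM i₀)
  have hQ : M^2/2 - (∑ i, |a i|) * M ≤ ∑ i, ((ξ i)^2/2 - a i * ξ i) := by
    have h1 : ∀ i : Fin d, (ξ i)^2/2 - |a i| * M ≤ (ξ i)^2/2 - a i * ξ i := by
      intro i
      have : a i * ξ i ≤ |a i| * M := by
        calc a i * ξ i ≤ |a i * ξ i| := le_abs_self _
          _ = |a i| * |ξ i| := abs_mul _ _
          _ ≤ |a i| * M := mul_le_mul_of_nonneg_left (hM i) (abs_nonneg _)
      linarith
    calc M^2/2 - (∑ i, |a i|) * M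
        ≤ (∑ i, (ξ i)^2/2) - (∑ i, |a i|) * M := by
          have h2 : M^2/2 ≤ ∑ i, (ξ i)^2/2 := by
            have h3 : M^2 ≤ (ξ i₀)^2 := by
              rw [← sq_abs (ξ i₀)]
              exact pow_le_pow_left₀ hM0 hi₀ 2
            have h4 : (ξ i₀)^2/2 ≤ ∑ i, (ξ i)^2/2 :=
              Finset.single_le_sum (f := fun i => (ξ i)^2/2)
                (fun i _ => by positivity) (Finset.mem_univ i₀)
            linarith
          linarith
      _ = ∑ i, ((ξ i)^2/2 - |a i| * M) := by rw [Finset.sum_sub_distrib, ← Finset.sum_mul]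
      _ ≤ ∑ i, ((ξ i)^2/2 - a i * ξ i) := Finset.sum_le_sum fun i _ => h1 i
  have hL : (∑ p, ∑ q ∈ Finset.univ.erase p, c p q * Real.log (ξ p - ξ q))
      ≤ (∑ p, ∑ q ∈ Finset.univ.erase p, c p q) * (2*M) := by
    rw [Finset.sum_mul]
    refine Finset.sum_le_sum fun p _ => ?_
    rw [Finset.sum_mul]
    refine Finset.sum_le_sum fun q hq => ?_
    have hqp : q ≠ p := Finset.ne_of_mem_erase hq
    have hcpq : 0 ≤ c p q := hc p q hqp.symm
    refine mul_le_mul_of_nonneg_left ?_ hcpq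
    calc Real.log (ξ p - ξ q) = Real.log |ξ p - ξ q| := (Real.log_abs _).symm
      _ ≤ |ξ p - ξ q| := Real.log_le_self (abs_nonneg _)
      _ ≤ |ξ p| + |ξ q| := abs_sub _ _
      _ ≤ 2*M := by have := hM p; have := hM q; linarith
  unfold FF
  nlinarith [hQ, hL]

lemma lb2 {d : ℕ} (a : Fin d → ℝ) (c : Fin d → Fin d → ℝ)
    (hc : ∀ p q : Fin d, p ≠ q → 0 ≤ c p q) (ξ : Fin d → ℝ) (R : ℝ) (hR0 : 0 ≤ R)
    (hR : ∀ i, |ξ i| ≤ R) (k l : Fin d) (hkl : k ≠ l) :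
    -((∑ i, |a i|)*R) - (∑ p, ∑ q ∈ Finset.univ.erase p, c p q) * R
      - (1/2) * (c k l * (Real.log (ξ k - ξ l) - 2*R)) ≤ FF a c ξ := by
  classical
  have hQ : -((∑ i, |a i|)*R) ≤ ∑ i, ((ξ i)^2/2 - a i * ξ i) := by
    have h1 : ∀ i : Fin d, -(|a i| * R) ≤ (ξ i)^2/2 - a i * ξ i := by
      intro i
      have h2 : a i * ξ i ≤ |a i| * R := by
        calc a i * ξ i ≤ |a i * ξ i| := le_abs_self _
          _ = |a i| * |ξ i| := abs_mul _ _
          _ ≤ |a i| * R := mul_le_mul_of_nonneg_left (hR i) (abs_nonneg _)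
      nlinarith [sq_nonneg (ξ i)]
    calc -((∑ i, |a i|)*R) = ∑ i, -(|a i| * R) := by
          rw [Finset.sum_neg_distrib, Finset.sum_mul]
      _ ≤ ∑ i, ((ξ i)^2/2 - a i * ξ i) := Finset.sum_le_sum fun i _ => h1 i
  have hterm : ∀ p : Fin d, ∀ q ∈ Finset.univ.erase p,
      c p q * (Real.log (ξ p - ξ q) - 2*R) ≤ 0 := by
    intro p q hq
    have hqp : q ≠ p := Finset.ne_of_mem_erase hq
    refine mul_nonpos_of_nonneg_of_nonpos (hc p q hqp.symm) ?_
    have : Real.log (ξ p - ξ q) ≤ 2*R := by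
      calc Real.log (ξ p - ξ q) = Real.log |ξ p - ξ q| := (Real.log_abs _).symm
        _ ≤ |ξ p - ξ q| := Real.log_le_self (abs_nonneg _)
        _ ≤ |ξ p| + |ξ q| := abs_sub _ _
        _ ≤ 2*R := by have := hR p; have := hR q; linarith
    linarith
  have hL : (∑ p, ∑ q ∈ Finset.univ.erase p, c p q * Real.log (ξ p - ξ q))
      ≤ c k l * (Real.log (ξ k - ξ l) - 2*R)
        + (∑ p, ∑ q ∈ Finset.univ.erase p, c p q) * (2*R) := by
    have key : (∑ p, ∑ q ∈ Finset.univ.erase p, c p q * (Real.log (ξ p - ξ q) - 2*R))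
        ≤ c k l * (Real.log (ξ k - ξ l) - 2*R) := by
      have hrow : ∀ p : Fin d, (∑ q ∈ Finset.univ.erase p, c p q * (Real.log (ξ p - ξ q) - 2*R)) ≤ 0 :=
        fun p => Finset.sum_nonpos (hterm p)
      have hrowk : (∑ q ∈ Finset.univ.erase k, c k q * (Real.log (ξ k - ξ q) - 2*R))
          ≤ c k l * (Real.log (ξ k - ξ l) - 2*R) := by
        have hl : l ∈ Finset.univ.erase k := Finset.mem_erase.2 ⟨hkl.symm, Finset.mem_univ l⟩
        rw [← Finset.add_sum_erase _ _ hl]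
        have : (∑ q ∈ (Finset.univ.erase k).erase l, c k q * (Real.log (ξ k - ξ q) - 2*R)) ≤ 0 :=
          Finset.sum_nonpos fun q hq => hterm k q (Finset.mem_of_mem_erase hq)
        linarith
      calc (∑ p, ∑ q ∈ Finset.univ.erase p, c p q * (Real.log (ξ p - ξ q) - 2*R))
          = (∑ q ∈ Finset.univ.erase k, c k q * (Real.log (ξ k - ξ q) - 2*R))
            + ∑ p ∈ Finset.univ.erase k, ∑ q ∈ Finset.univ.erase p, c p q * (Real.log (ξ p - ξ q) - 2*R) :=
            (Finset.add_sum_erase _ _ (Finset.mem_univ k)).symm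
        _ ≤ c k l * (Real.log (ξ k - ξ l) - 2*R) + 0 := by
            have := Finset.sum_nonpos (fun p (_ : p ∈ Finset.univ.erase k) => hrow p)
            exact add_le_add hrowk this
        _ = c k l * (Real.log (ξ k - ξ l) - 2*R) := add_zero _
    have expand : (∑ p, ∑ q ∈ Finset.univ.erase p, c p q * (Real.log (ξ p - ξ q) - 2*R))
        = (∑ p, ∑ q ∈ Finset.univ.erase p, c p q * Real.log (ξ p - ξ q))
          - (∑ p, ∑ q ∈ Finset.univ.erase p, c p q) * (2*R) := by
      rw [Finset.sum_mul, ← Finset.sum_sub_distrib]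
      refine Finset.sum_congr rfl fun p _ => ?_
      rw [Finset.sum_mul, ← Finset.sum_sub_distrib]
      refine Finset.sum_congr rfl fun q _ => ?_
      ring
    linarith [key, expand.symm.le]
  unfold FF
  nlinarith [hQ, hL]


end WeylAux


/-- Existence of a solution in the Weyl chamber `Δ_d` of the
system `ξ i = a i + ∑_{j ≠ i} c i j / (ξ i - ξ j)`, when `c` is symmetric,
nonnegative, and positive on neighbouring indices. -/
theorem exists_strictMono_solution
    (d : ℕ) (hd : 2 ≤ d) (a : Fin d → ℝ) (c : Fin d → Fin d → ℝ)
    (hsymm : ∀ i j : Fin d, i ≠ j → c i j = c j i)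
    (hnonneg : ∀ i j : Fin d, i ≠ j → 0 ≤ c i j)
    (hpos : ∀ i : Fin d, ∀ h : (i : ℕ) + 1 < d, 0 < c i ⟨(i : ℕ) + 1, h⟩) :
    ∃ ξ : Fin d → ℝ, StrictMono ξ ∧
      ∀ i : Fin d, ξ i = a i + ∑ j ∈ Finset.univ.erase i, c i j / (ξ i - ξ j) := by
  classical
  set A : ℝ := ∑ i, |a i| with hA
  set C : ℝ := ∑ p, ∑ q ∈ Finset.univ.erase p, c p q with hC
  have hA0 : 0 ≤ A := Finset.sum_nonneg fun i _ => abs_nonneg _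
  have hC0 : 0 ≤ C := Finset.sum_nonneg fun p _ => Finset.sum_nonneg fun q hq =>
    hnonneg p q (Ne.symm (Finset.ne_of_mem_erase hq))
  set ξ₀ : Fin d → ℝ := fun i => (i.val : ℝ) with hξ₀
  set m : ℝ := WeylAux.FF a c ξ₀ with hm
  set R : ℝ := (d : ℝ) + 2*(A + C) + 2*|m| + 2 with hR
  have hR0 : 0 ≤ R := by positivity
  -- lo / hi endpoints of the consecutive gaps
  set lo : Fin (d-1) → Fin d := fun k => ⟨k.val, by have := k.2; omega⟩ with hlo
  set hi : Fin (d-1) → Fin d := fun k => ⟨k.val + 1, by have := k.2; omega⟩ with hhi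
  have hlohi : ∀ k, lo k < hi k := fun k => by simp [hlo, hhi, Fin.lt_def]
  have hclohi : ∀ k : Fin (d-1), 0 < c (lo k) (hi k) := by
    intro k
    have h1 : ((lo k : Fin d) : ℕ) + 1 < d := by simp [hlo]; have := k.2; omega
    have := hpos (lo k) h1
    convert this using 2
  set E : Fin (d-1) → ℝ := fun k =>
    min (Real.exp ((2*(-(A*R) - C*R - m)) / c (lo k) (hi k))) 1 with hE
  have hE0 : ∀ k, 0 < E k := fun k => lt_min (Real.exp_pos _) one_pos
  set K : Set (Fin d → ℝ) :=
    {ξ | (∀ i, |ξ i| ≤ R) ∧ ∀ k : Fin (d-1), E k ≤ ξ (hi k) - ξ (lo k)} with hK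
  -- K consists of strictly monotone tuples
  have hKmono : ∀ ξ ∈ K, StrictMono ξ := by
    intro ξ hξ
    refine WeylAux.strictMono_of_consec ξ fun k hk => ?_
    have hk' : k < d - 1 := by omega
    have := hξ.2 ⟨k, hk'⟩
    have hEk := hE0 ⟨k, hk'⟩
    simp only [hlo, hhi] at this
    have : 0 < ξ ⟨k+1, by omega⟩ - ξ ⟨k, by omega⟩ := lt_of_lt_of_le hEk this
    linarith [this]
  have hKdist : ∀ ξ ∈ K, ∀ p q : Fin d, p ≠ q → ξ p ≠ ξ q :=
    fun ξ hξ p q hpq => (hKmono ξ hξ).injective.ne hpq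
  -- K is compact
  have hKc : IsCompact K := by
    have hKeq : K = (Set.pi Set.univ fun _ : Fin d => Set.Icc (-R) R)
        ∩ ⋂ k : Fin (d-1), {ξ : Fin d → ℝ | E k ≤ ξ (hi k) - ξ (lo k)} := by
      ext ξ
      simp only [hK, Set.mem_setOf_eq, Set.mem_inter_iff, Set.mem_pi, Set.mem_univ,
        true_implies, Set.mem_Icc, Set.mem_iInter, abs_le]
    rw [hKeq]
    exact (isCompact_univ_pi fun _ => isCompact_Icc).inter_right
      (isClosed_iInter fun k => isClosed_le continuous_const
        ((continuous_apply (hi k)).sub (continuous_apply (lo k))))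
  -- ξ₀ belongs to K
  have hξ₀K : ξ₀ ∈ K := by
    constructor
    · intro i
      have h1 : |ξ₀ i| = (i.val : ℝ) := by
        simp only [hξ₀]
        exact abs_of_nonneg (by positivity)
      have h2 : (i.val : ℝ) ≤ (d : ℝ) := by exact_mod_cast (i.isLt).le
      rw [h1, hR]
      linarith [abs_nonneg m, hA0, hC0]
    · intro k
      have : ξ₀ (hi k) - ξ₀ (lo k) = 1 := by
        simp [hξ₀, hlo, hhi]
      rw [this]
      exact min_le_right _ _
  -- minimiser over K
  obtain ⟨ξs, hξsK, hminOn⟩ := hKc.exists_isMinOn ⟨ξ₀, hξ₀K⟩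
    ((WeylAux.contOn a c).mono fun ξ hξ => hKdist ξ hξ)
  have hmono : StrictMono ξs := hKmono ξs hξsK
  have hξsm : WeylAux.FF a c ξs ≤ m := hminOn hξ₀K
  -- ξs is a global minimiser over all strictly monotone tuples
  have hglobal : ∀ η : Fin d → ℝ, StrictMono η → WeylAux.FF a c ξs ≤ WeylAux.FF a c η := by
    intro η hη
    by_contra hlt
    push_neg at hlt
    have hηm : WeylAux.FF a c η ≤ m := le_trans hlt.le hξsm
    obtain ⟨i₀, -, hi₀⟩ := Finset.exists_max_image Finset.univ (fun i => |η i|)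
      ⟨⟨0, by omega⟩, Finset.mem_univ _⟩
    have hlb1 := WeylAux.lb1 a c hnonneg η (|η i₀|) (fun i => hi₀ i (Finset.mem_univ i)) i₀ le_rfl
    have hMR : |η i₀| ≤ R := by
      by_contra hMR
      push_neg at hMR
      rw [hR] at hMR
      nlinarith [abs_nonneg m, le_abs_self m, hA0, hC0, abs_nonneg (η i₀), Nat.cast_nonneg (α := ℝ) d]
    have hcoord : ∀ i, |η i| ≤ R := fun i => le_trans (hi₀ i (Finset.mem_univ i)) hMR
    have hgap : ∀ k : Fin (d-1), E k ≤ η (hi k) - η (lo k) := by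
      intro k
      have hgpos : 0 < η (hi k) - η (lo k) := sub_pos.2 (hη (hlohi k))
      have hckl := hclohi k
      have hlb2 := WeylAux.lb2 a c hnonneg η R hR0 hcoord (lo k) (hi k) (ne_of_lt (hlohi k))
      have hloggap : Real.log (η (lo k) - η (hi k)) = Real.log (η (hi k) - η (lo k)) := by
        rw [show η (lo k) - η (hi k) = -(η (hi k) - η (lo k)) by ring, Real.log_neg_eq_log]
      rw [hloggap] at hlb2
      have h1 : (2*(-(A*R) - C*R - m)) / c (lo k) (hi k)
          ≤ Real.log (η (hi k) - η (lo k)) := by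
        rw [div_le_iff₀ hckl]
        nlinarith [mul_nonneg (le_of_lt hckl) hR0]
      calc E k ≤ Real.exp ((2*(-(A*R) - C*R - m)) / c (lo k) (hi k)) := min_le_left _ _
        _ ≤ Real.exp (Real.log (η (hi k) - η (lo k))) := Real.exp_le_exp.2 h1
        _ = η (hi k) - η (lo k) := Real.exp_log hgpos
    exact absurd (hminOn (⟨hcoord, hgap⟩ : η ∈ K)) (not_le.2 hlt)
  -- conclude: each partial derivative vanishes
  refine ⟨ξs, hmono, fun i => ?_⟩
  have hdist : ∀ p q : Fin d, p ≠ q → ξs p ≠ ξs q := hKdist ξs hξsK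
  have hder := WeylAux.slice_hasDerivAt a c ξs hdist i
  have hloc : IsLocalMin (fun t => WeylAux.FF a c (Function.update ξs i t)) (ξs i) := by
    have hcont : Continuous (fun t : ℝ => Function.update ξs i t) := by
      refine continuous_pi fun p => ?_
      by_cases hp : p = i
      · subst hp
        simp only [Function.update_self]
        exact continuous_id
      · simp only [Function.update_of_ne hp]
        exact continuous_const
    have hopen : IsOpen ((fun t : ℝ => Function.update ξs i t) ⁻¹' {ξ : Fin d → ℝ | StrictMono ξ}) :=
      WeylAux.isOpen_strictMono.preimage hcont
    have hmem : ξs i ∈ (fun t : ℝ => Function.update ξs i t) ⁻¹' {ξ : Fin d → ℝ | StrictMono ξ} := by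
      simp only [Set.mem_preimage, Function.update_eq_self, Set.mem_setOf_eq]
      exact hmono
    refine Filter.eventually_of_mem (hopen.mem_nhds hmem) fun t ht => ?_
    have h1 : WeylAux.FF a c (Function.update ξs i (ξs i)) = WeylAux.FF a c ξs := by
      rw [Function.update_eq_self]
    show WeylAux.FF a c (Function.update ξs i (ξs i)) ≤ WeylAux.FF a c (Function.update ξs i t)
    rw [h1]
    exact hglobal _ ht
  have hzero := hloc.hasDerivAt_eq_zero hder
  have hSS : (∑ j ∈ Finset.univ.erase i, c j i * (1/(ξs i - ξs j)))
      = ∑ j ∈ Finset.univ.erase i, c i j * (1/(ξs i - ξs j)) := by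
    refine Finset.sum_congr rfl fun j hj => ?_
    rw [hsymm j i (Finset.ne_of_mem_erase hj)]
  rw [hSS] at hzero
  have hdiv : (∑ j ∈ Finset.univ.erase i, c i j * (1/(ξs i - ξs j)))
      = ∑ j ∈ Finset.univ.erase i, c i j / (ξs i - ξs j) := by
    refine Finset.sum_congr rfl fun j _ => ?_
    rw [mul_one_div]
  rw [hdiv] at hzero
  linarith [hzero]
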